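/- Let (S_k) be the Bernoulli(p) random walk started at 0 and τ_a = min{n ≥ 1 : S_n = a} the first hitting time of level a ∈ ℤ \ {0}. Then for k ≥ |a| with k − a even, P(τ_a = k) = (|a|/k) · C(k, (k+a)/2) · p^{(k+a)/2} · q^{(k-a)/2}. -/

import Mathlib

open Finset

namespace RWAux

def lstep (b : Bool) : ℤ := if b then 1 else -1

def psum (f : ℕ → Bool) (m : ℕ) : ℤ := ∑ i ∈ Finset.range m, lstep (f i)

def FPf (a : ℤ) (k : ℕ) (f : ℕ → Bool) : Prop :=
  psum f k = a ∧ ∀ m < k, 1 ≤ m → psum f m ≠ a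

instance (a k f) : Decidable (FPf a k f) := by unfold FPf; exact instDecidableAnd

def ext {k : ℕ} (g : Fin k → Bool) : ℕ → Bool :=
  fun i => if h : i < k then g ⟨i, h⟩ else false

def fpCount (k : ℕ) (a : ℤ) : ℕ :=
  (Finset.univ.filter (fun g : Fin k → Bool => FPf a k (ext g))).card

lemma psum_congr {f f' : ℕ → Bool} {m : ℕ} (h : ∀ i < m, f i = f' i) :
    psum f m = psum f' m :=
  Finset.sum_congr rfl fun i hi => by rw [h i (Finset.mem_range.mp hi)]

lemma psum_succ' (f : ℕ → Bool) (m : ℕ) :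
    psum f (m + 1) = lstep (f 0) + psum (fun i => f (i + 1)) m := by
  unfold psum
  rw [Finset.sum_range_succ' (fun i => lstep (f i)) m, add_comm]

lemma ext_tail {k : ℕ} (g : Fin (k + 1) → Bool) (i : ℕ) :
    ext g (i + 1) = ext (Fin.tail g) i := by
  unfold ext Fin.tail
  by_cases h : i < k
  · rw [dif_pos h, dif_pos (by omega : i + 1 < k + 1)]
    congr 1
  · rw [dif_neg h, dif_neg (by omega)]

lemma psum_ext_succ {k : ℕ} (g : Fin (k + 1) → Bool) (m : ℕ) :
    psum (ext g) (m + 1) = lstep (g 0) + psum (ext (Fin.tail g)) m := by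
  rw [psum_succ']
  have h0 : ext g 0 = g 0 := by
    unfold ext; rw [dif_pos (Nat.succ_pos k)]; rfl
  rw [h0]
  congr 1
  exact psum_congr fun i _ => ext_tail g i

lemma FPf_cons {k : ℕ} (hk : 1 ≤ k) (a : ℤ) (g : Fin (k + 1) → Bool) :
    FPf a (k + 1) (ext g) ↔ lstep (g 0) ≠ a ∧ FPf (a - lstep (g 0)) k (ext (Fin.tail g)) := by
  unfold FPf
  constructor
  · rintro ⟨hsum, hmid⟩
    rw [psum_ext_succ] at hsum
    refine ⟨?_, by omega, ?_⟩
    · have := hmid 1 (by omega) le_rfl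
      rw [psum_ext_succ] at this
      simpa [psum] using this
    · intro m hm hm1
      have := hmid (m + 1) (by omega) (by omega)
      rw [psum_ext_succ] at this
      omega
  · rintro ⟨h0, hsum, hmid⟩
    constructor
    · rw [psum_ext_succ]; omega
    · intro m hm hm1
      obtain ⟨j, rfl⟩ : ∃ j, m = j + 1 := ⟨m - 1, by omega⟩
      rw [psum_ext_succ]
      rcases Nat.eq_zero_or_pos j with rfl | hj
      · simpa [psum] using h0
      · have := hmid j (by omega) hj
        omega

end RWAux

namespace RWAux

lemma card_split (k : ℕ) (a : ℤ) :
    fpCount (k + 1) a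
      = ((univ.filter fun g : Fin (k + 1) → Bool => FPf a (k + 1) (ext g) ∧ g 0 = true)).card
      + ((univ.filter fun g : Fin (k + 1) → Bool => FPf a (k + 1) (ext g) ∧ g 0 = false)).card := by
  unfold fpCount
  rw [← Finset.filter_filter, ← Finset.filter_filter]
  rw [← Finset.card_filter_add_card_filter_not
    (s := univ.filter fun g : Fin (k + 1) → Bool => FPf a (k + 1) (ext g))
    (p := fun g => g 0 = true)]
  congr 2
  ext g
  simp

lemma card_cons (k : ℕ) (hk : 1 ≤ k) (a : ℤ) (b : Bool) (hb : lstep b ≠ a) :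
    ((univ.filter fun g : Fin (k + 1) → Bool => FPf a (k + 1) (ext g) ∧ g 0 = b)).card
      = fpCount k (a - lstep b) := by
  unfold fpCount
  refine Finset.card_bij' (fun g _ => Fin.tail g) (fun h _ => Fin.cons b h) ?hi ?hj ?li ?ri
  case hi =>
    intro g hg
    simp only [Finset.mem_filter, Finset.mem_univ, true_and] at hg ⊢
    obtain ⟨hfp, h0⟩ := hg
    rw [FPf_cons hk] at hfp
    rw [← h0]
    exact hfp.2
  case hj =>
    intro h hh
    simp only [Finset.mem_filter, Finset.mem_univ, true_and] at hh ⊢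
    refine ⟨(FPf_cons hk a _).mpr ?_, rfl⟩
    rw [show (Fin.cons b h : Fin (k+1) → Bool) 0 = b from rfl, Fin.tail_cons]
    exact ⟨hb, hh⟩
  case li =>
    intro g hg
    simp only [Finset.mem_filter, Finset.mem_univ, true_and] at hg
    obtain ⟨-, h0⟩ := hg
    subst h0
    show Fin.cons (g 0) (Fin.tail g) = g
    exact Fin.cons_self_tail g
  case ri =>
    intro h hh
    funext i
    simp [Fin.tail_cons]

lemma card_cons_zero (k : ℕ) (hk : 1 ≤ k) (a : ℤ) (b : Bool) (hb : lstep b = a) :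
    ((univ.filter fun g : Fin (k + 1) → Bool => FPf a (k + 1) (ext g) ∧ g 0 = b)).card = 0 := by
  rw [Finset.card_eq_zero, Finset.filter_eq_empty_iff]
  rintro g - ⟨hfp, h0⟩
  rw [FPf_cons hk] at hfp
  exact hfp.1 (by rw [h0, hb])

lemma fpCount_succ_one (k : ℕ) (hk : 1 ≤ k) : fpCount (k + 1) 1 = fpCount k 2 := by
  rw [card_split, card_cons_zero k hk 1 true rfl,
    card_cons k hk 1 false (by rw [show lstep false = (-1:ℤ) from rfl]; decide)]
  rw [show lstep false = (-1:ℤ) from rfl]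
  norm_num

lemma fpCount_succ (k : ℕ) (hk : 1 ≤ k) (a : ℤ) (ha1 : a ≠ 1) (ha2 : a ≠ -1) :
    fpCount (k + 1) a = fpCount k (a - 1) + fpCount k (a + 1) := by
  rw [card_split,
    card_cons k hk a true (by rw [show lstep true = (1:ℤ) from rfl]; exact fun h => ha1 h.symm),
    card_cons k hk a false (by rw [show lstep false = (-1:ℤ) from rfl]; exact fun h => ha2 h.symm)]
  rw [show lstep true = (1:ℤ) from rfl, show lstep false = (-1:ℤ) from rfl, sub_neg_eq_add]

lemma FPf_one (a : ℤ) (g : Fin 1 → Bool) : FPf a 1 (ext g) ↔ lstep (g 0) = a := by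
  unfold FPf
  constructor
  · rintro ⟨hsum, -⟩
    rw [← hsum]
    simp [psum, ext]
  · intro h
    refine ⟨by simpa [psum, ext] using h, by omega⟩

lemma fpCount_one_one : fpCount 1 1 = 1 := by
  unfold fpCount
  rw [show (univ.filter fun g : Fin 1 → Bool => FPf 1 1 (ext g)) = {fun _ => true} from ?_]
  · exact Finset.card_singleton _
  ext g
  simp only [Finset.mem_filter, Finset.mem_univ, true_and, Finset.mem_singleton, FPf_one]
  constructor
  · intro h
    funext i
    have : i = 0 := Subsingleton.elim _ _
    subst this
    revert h
    cases g 0 <;> simp [lstep]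
  · rintro rfl; rfl

lemma fpCount_one_big (a : ℤ) (h1 : a ≠ 1) (h2 : a ≠ -1) : fpCount 1 a = 0 := by
  unfold fpCount
  rw [Finset.card_eq_zero, Finset.filter_eq_empty_iff]
  rintro g -
  rw [FPf_one]
  cases g 0 <;> simp [lstep] <;> omega

end RWAux

namespace RWAux

lemma choose_symm_half' (J : ℕ) : (2 * J + 1).choose J = (2 * J + 1).choose (J + 1) := by
  rw [← Nat.choose_symm (by omega : J + 1 ≤ 2 * J + 1)]
  congr 1
  omega

lemma fpCount_closed : ∀ k, 1 ≤ k → ∀ j : ℕ, k + 1 ≤ 2 * j →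
    (fpCount k (2 * (j : ℤ) - k) : ℤ) = (k - 1).choose (j - 1) - (k - 1).choose j := by
  intro k hk
  induction k, hk using Nat.le_induction with
  | base =>
    intro j hj
    rcases Nat.lt_or_ge j 2 with hj2 | hj2
    · have : j = 1 := by omega
      subst this
      norm_num [fpCount_one_one]
    · rw [show (2 * (j : ℤ) - (1 : ℕ)) = 2 * (j : ℤ) - 1 by push_cast; ring]
      rw [fpCount_one_big _ (by omega) (by omega)]
      rw [Nat.choose_eq_zero_of_lt (by omega : (0:ℕ) < j - 1),
        Nat.choose_eq_zero_of_lt (by omega : (0:ℕ) < j)]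
      simp
  | succ k hk IH =>
    intro j hj
    obtain ⟨J, rfl⟩ : ∃ J, j = J + 2 := ⟨j - 2, by omega⟩
    obtain ⟨K, rfl⟩ : ∃ K, k = K + 1 := ⟨k - 1, by omega⟩
    rcases Nat.lt_or_ge (K + 1) (2 * J + 2) with hcase | hcase
    · -- a ≥ 2 case
      have e : (2 * ((J + 2 : ℕ) : ℤ) - ((K + 1 + 1 : ℕ) : ℤ)) = 2 * (J : ℤ) + 2 - K := by
        push_cast; ring
      rw [e, show (2 * (J:ℤ) + 2 - K) = (2 * (J:ℤ) + 2 - K - 1) + 1 by ring] at *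
      rw [show (2 * (J:ℤ) + 2 - K - 1 + 1) = 2 * (J:ℤ) + 2 - K by ring]
      rw [fpCount_succ (K + 1) hk _ (by omega) (by omega)]
      have h1 := IH (J + 1) (by omega)
      have h2 := IH (J + 2) (by omega)
      rw [show (2 * ((J + 1 : ℕ) : ℤ) - ((K + 1 : ℕ) : ℤ)) = 2 * (J:ℤ) + 2 - K - 1 by
        push_cast; ring] at h1
      rw [show (2 * ((J + 2 : ℕ) : ℤ) - ((K + 1 : ℕ) : ℤ)) = 2 * (J:ℤ) + 2 - K + 1 by
        push_cast; ring] at h2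
      simp only [Nat.add_sub_cancel] at h1 h2 ⊢
      have p1 : (K + 1).choose (J + 1) = K.choose J + K.choose (J + 1) :=
        Nat.choose_succ_succ K J
      have p2 : (K + 1).choose (J + 2) = K.choose (J + 1) + K.choose (J + 2) :=
        Nat.choose_succ_succ K (J + 1)
      push_cast [p1, p2] at *
      omega
    · -- a = 1 case : K + 1 = 2J + 2
      have hKval : K = 2 * J + 1 := by omega
      subst hKval
      rw [show (2 * ((J + 2 : ℕ) : ℤ) - ((2 * J + 1 + 1 + 1 : ℕ) : ℤ)) = 1 by push_cast; ring]
      rw [fpCount_succ_one _ hk]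
      have h2 := IH (J + 2) (by omega)
      rw [show (2 * ((J + 2 : ℕ) : ℤ) - ((2 * J + 1 + 1 : ℕ) : ℤ)) = 2 by push_cast; ring] at h2
      simp only [Nat.add_sub_cancel] at h2 ⊢
      have p1 : (2 * J + 1 + 1).choose (J + 1) = (2 * J + 1).choose J + (2 * J + 1).choose (J + 1) :=
        Nat.choose_succ_succ _ _
      have p2 : (2 * J + 1 + 1).choose (J + 2) = (2 * J + 1).choose (J + 1) + (2 * J + 1).choose (J + 2) :=
        Nat.choose_succ_succ _ _
      have hs := choose_symm_half' J
      push_cast [p1, p2] at *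
      omega

lemma lstep_not (b : Bool) : lstep (!b) = - lstep b := by cases b <;> rfl

lemma psum_not (f : ℕ → Bool) (m : ℕ) : psum (fun i => !(f i)) m = - psum f m := by
  unfold psum
  rw [← Finset.sum_neg_distrib]
  exact Finset.sum_congr rfl fun i _ => lstep_not (f i)

lemma FPf_not {k : ℕ} (a : ℤ) (g : Fin k → Bool) :
    FPf (-a) k (ext fun i => !(g i)) ↔ FPf a k (ext g) := by
  have hp : ∀ m ≤ k, psum (ext fun i => !(g i)) m = - psum (ext g) m := by
    intro m hm
    rw [show psum (ext fun i => !(g i)) m = psum (fun i => !(ext g i)) m from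
      psum_congr fun i hi => by
        unfold ext
        rw [dif_pos (lt_of_lt_of_le hi hm), dif_pos (lt_of_lt_of_le hi hm)]]
    exact psum_not _ m
  unfold FPf
  rw [hp k le_rfl]
  constructor
  · rintro ⟨hsum, hmid⟩
    refine ⟨by omega, fun m hm hm1 => ?_⟩
    have := hmid m hm hm1
    rw [hp m (le_of_lt hm)] at this
    omega
  · rintro ⟨hsum, hmid⟩
    refine ⟨by omega, fun m hm hm1 => ?_⟩
    rw [hp m (le_of_lt hm)]
    have := hmid m hm hm1
    omega

lemma fpCount_neg (k : ℕ) (a : ℤ) : fpCount k (-a) = fpCount k a := by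
  unfold fpCount
  refine Finset.card_bij' (fun g _ => fun i => !(g i)) (fun g _ => fun i => !(g i))
    ?hi ?hj ?li ?ri
  case hi =>
    intro g hg
    simp only [Finset.mem_filter, Finset.mem_univ, true_and] at hg ⊢
    rw [← FPf_not]
    simpa using hg
  case hj =>
    intro g hg
    simp only [Finset.mem_filter, Finset.mem_univ, true_and] at hg ⊢
    exact (FPf_not a g).mpr hg
  case li => intro g hg; funext i; simp
  case ri => intro g hg; funext i; simp

end RWAux

namespace RWAux

lemma choose_id (k j : ℕ) (hk : 1 ≤ k) (hj : j ≤ k) (hjk : k + 1 ≤ 2 * j) :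
    (2 * (j : ℝ) - k) / k * (k.choose j : ℝ)
      = ((k - 1).choose (j - 1) : ℝ) - ((k - 1).choose j : ℝ) := by
  have hk0 : (k : ℝ) ≠ 0 := Nat.cast_ne_zero.mpr (by omega)
  have hj1 : 1 ≤ j := by omega
  rcases eq_or_lt_of_le hj with rfl | hlt
  · rw [Nat.choose_self, Nat.choose_eq_zero_of_lt (by omega : j - 1 < j), Nat.choose_self]
    push_cast
    field_simp
    ring
  · -- j < k
    have id1 : k * (k - 1).choose (j - 1) = k.choose j * j := by
      have h := Nat.add_one_mul_choose_eq (k - 1) (j - 1)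
      rwa [show (k-1) + 1 = k by omega,
        show (j-1) + 1 = j by omega] at h
    have id2 : k * (k - 1).choose j = k.choose j * (k - j) := by
      have h := Nat.add_one_mul_choose_eq (k - 1) (k - j - 1)
      rw [show (k-1) + 1 = k by omega,
        show (k - j - 1) + 1 = k - j by omega] at h
      rwa [show k - j - 1 = (k - 1) - j by omega, Nat.choose_symm (by omega : j ≤ k - 1),
        Nat.choose_symm hj] at h
    have c1 : ((k : ℝ)) * ((k - 1).choose (j - 1) : ℝ) = (k.choose j : ℝ) * j := by
      exact_mod_cast congrArg (Nat.cast (R := ℝ)) id1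
    have c2 : ((k : ℝ)) * ((k - 1).choose j : ℝ) = (k.choose j : ℝ) * ((k : ℝ) - j) := by
      have h := congrArg (Nat.cast (R := ℝ)) id2
      push_cast [Nat.cast_sub hj] at h
      linarith [h]
    rw [div_mul_eq_mul_div, div_eq_iff hk0]
    linarith [c1, c2]

/-- The main counting result, in real form. -/
lemma main_count (k : ℕ) (a : ℤ) (ha : a ≠ 0) (hk : a.natAbs ≤ k) (j : ℕ)
    (hj : (k : ℤ) + a = 2 * j) :
    ((fpCount k a : ℝ)) = (a.natAbs : ℝ) / k * (k.choose j : ℝ) := by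
  have hk1 : 1 ≤ k := le_trans (Int.natAbs_pos.mpr ha) hk
  have hjk : j ≤ k := by omega
  rcases lt_or_gt_of_ne ha with hneg | hpos
  · -- a < 0
    have habs : (a.natAbs : ℤ) = -a := by omega
    have hj' : (2 : ℤ) * ((k - j : ℕ) : ℤ) - k = -a := by push_cast; omega
    have hcount := fpCount_neg k (-a)
    rw [neg_neg] at hcount
    have hle : k + 1 ≤ 2 * (k - j) := by omega
    have hcf := fpCount_closed k hk1 (k - j) hle
    rw [hj'] at hcf
    rw [hcount]
    have hcast : ((fpCount k (-a)) : ℝ)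
        = ((k - 1).choose (k - j - 1) : ℝ) - ((k - 1).choose (k - j) : ℝ) := by
      exact_mod_cast hcf
    rw [hcast, ← choose_id k (k - j) hk1 (by omega) hle, Nat.choose_symm hjk]
    congr 1
    rw [Nat.cast_sub hjk]
    have h1 : (a.natAbs : ℝ) = -(a : ℝ) := by
      rw [Nat.cast_natAbs, Int.abs_eq_natAbs]
      exact_mod_cast habs
    have h2 : (k : ℝ) + (a : ℝ) = 2 * j := by exact_mod_cast hj
    rw [h1]
    congr 1
    linarith
  · -- a > 0
    have habs : (a.natAbs : ℤ) = a := by omega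
    have hle : k + 1 ≤ 2 * j := by omega
    have hcf := fpCount_closed k hk1 j hle
    rw [show (2 : ℤ) * (j : ℤ) - k = a by omega] at hcf
    have hcast : ((fpCount k a) : ℝ)
        = ((k - 1).choose (j - 1) : ℝ) - ((k - 1).choose j : ℝ) := by
      exact_mod_cast hcf
    rw [hcast, ← choose_id k j hk1 hjk hle]
    congr 1
    have h1 : (a.natAbs : ℝ) = (a : ℝ) := by
      rw [Nat.cast_natAbs, Int.abs_eq_natAbs]
      exact_mod_cast habs
    have h2 : (k : ℝ) + (a : ℝ) = 2 * j := by exact_mod_cast hj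
    rw [h1]
    congr 1
    linarith

end RWAux

namespace RWAux

lemma psum_eq (f : ℕ → Bool) (m : ℕ) :
    psum f m = 2 * (((Finset.range m).filter fun i => f i = true).card : ℤ) - m := by
  induction m with
  | zero => simp [psum]
  | succ m ih =>
    have hsum : psum f (m + 1) = psum f m + lstep (f m) := Finset.sum_range_succ _ m
    rw [Finset.range_add_one, Finset.filter_insert]
    cases hc : f m
    · rw [if_neg (by simp [hc])]
      rw [hsum, ih]
      simp [lstep, hc]
      ring
    · rw [if_pos (by simp [hc])]
      rw [Finset.card_insert_of_notMem (by simp)]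
      rw [hsum, ih]
      simp [lstep, hc]
      push_cast
      ring

lemma lstep_inj {b₁ b₂ : Bool} (h : lstep b₁ = lstep b₂) : b₁ = b₂ := by
  cases b₁ <;> cases b₂ <;> simp_all [lstep]

lemma ext_val {k : ℕ} (g : Fin k → Bool) (i : Fin k) : ext g i.val = g i := by
  unfold ext
  rw [dif_pos i.isLt]

lemma lstep_mem (b : Bool) : lstep b = 1 ∨ lstep b = -1 := by
  cases b <;> simp [lstep]

end RWAux


open MeasureTheory ProbabilityTheory Finset

theorem law_tau_a {Ω : Type*} [MeasurableSpace Ω] (μ : Measure Ω)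
    [IsProbabilityMeasure μ]
    (p : ℝ) (hp0 : 0 < p) (hp1 : p < 1)
    (X : ℕ → Ω → ℤ) (hmeas : ∀ i, Measurable (X i))
    (hindep : iIndepFun X μ)
    (hX1 : ∀ i, μ {ω | X i ω = 1} = ENNReal.ofReal p)
    (hX2 : ∀ i, μ {ω | X i ω = -1} = ENNReal.ofReal (1 - p))
    (S : ℕ → Ω → ℤ) (hS : ∀ n ω, S n ω = ∑ i ∈ Finset.range n, X i ω)
    (a : ℤ) (ha : a ≠ 0) (k : ℕ) (hk : a.natAbs ≤ k) (heven : Even ((k : ℤ) - a))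
    :
    (μ {ω | S k ω = a ∧ ∀ m, 1 ≤ m → m < k → S m ω ≠ a}).toReal
      = ((a.natAbs : ℝ) / k) * (k.choose (((k : ℤ) + a) / 2).toNat : ℝ)
          * p ^ (((k : ℤ) + a) / 2).toNat * (1 - p) ^ (((k : ℤ) - a) / 2).toNat := by
  have hq0 : (0:ℝ) < 1 - p := by linarith
  have hka : 1 ≤ a.natAbs := Int.natAbs_pos.mpr ha
  have hk1 : 1 ≤ k := le_trans hka hk
  have hkZ : (a.natAbs : ℤ) ≤ (k : ℤ) := by exact_mod_cast hk
  have habs := Int.natAbs_eq a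
  have hrange : -(k:ℤ) ≤ a ∧ a ≤ (k:ℤ) := by omega
  -- the half-integer j
  obtain ⟨c, hc⟩ := heven
  set jn : ℕ := (((k : ℤ) + a) / 2).toNat with hjn
  have hj : (k : ℤ) + a = 2 * jn := by
    have h2 : ((k : ℤ) + a) = 2 * ((k - c : ℤ)) := by omega
    have hnn : 0 ≤ (k : ℤ) - c := by omega
    rw [hjn, h2]
    rw [Int.mul_ediv_cancel_left _ (by norm_num)]
    rw [Int.toNat_of_nonneg hnn]
  have hjkn : jn ≤ k := by omega
  have hj2 : (((k : ℤ) - a) / 2).toNat = k - jn := by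
    have h2 : ((k : ℤ) - a) = 2 * ((k - jn : ℕ) : ℤ) := by push_cast; omega
    rw [h2, Int.mul_ediv_cancel_left _ (by norm_num)]
    exact Int.toNat_natCast _
  set E := {ω | S k ω = a ∧ ∀ m, 1 ≤ m → m < k → S m ω ≠ a} with hE
  set Gs := (Finset.univ.filter fun g : Fin k → Bool => RWAux.FPf a k (RWAux.ext g)) with hGs
  set Cyl : (Fin k → Bool) → Set Ω :=
    fun g => ⋂ i ∈ Finset.range k, X i ⁻¹' {RWAux.lstep (RWAux.ext g i)} with hCyl
  have hPre : ∀ (i : ℕ) (val : ℤ), X i ⁻¹' {val} = {ω | X i ω = val} := fun i val => rfl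
  have hmemCyl : ∀ (g : Fin k → Bool) ω,
      ω ∈ Cyl g ↔ ∀ i < k, X i ω = RWAux.lstep (RWAux.ext g i) := by
    intro g ω
    simp [hCyl, Set.mem_iInter]
  have hXS : ∀ (g : Fin k → Bool) ω, (∀ i < k, X i ω = RWAux.lstep (RWAux.ext g i)) →
      ∀ m ≤ k, S m ω = RWAux.psum (RWAux.ext g) m := by
    intro g ω hX m hm
    rw [hS]
    exact Finset.sum_congr rfl fun i hi =>
      hX i (lt_of_lt_of_le (Finset.mem_range.mp hi) hm)
  -- the almost sure set
  set A := ⋂ i ∈ Finset.range k, (X i ⁻¹' {1} ∪ X i ⁻¹' {(-1 : ℤ)}) with hA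
  have hAmeas : MeasurableSet A :=
    MeasurableSet.biInter (Finset.range k).countable_toSet fun i _ =>
      ((hmeas i) (measurableSet_singleton _)).union ((hmeas i) (measurableSet_singleton _))
  have hXiprob : ∀ i, μ (X i ⁻¹' {1} ∪ X i ⁻¹' {(-1 : ℤ)}) = 1 := by
    intro i
    rw [measure_union (by
        rw [Set.disjoint_left]
        rintro ω h1 h2
        simp only [Set.mem_preimage, Set.mem_singleton_iff] at h1 h2
        omega) ((hmeas i) (measurableSet_singleton _))]
    rw [hPre, hPre, hX1 i, hX2 i, ← ENNReal.ofReal_add hp0.le hq0.le]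
    norm_num
  have hAc : μ Aᶜ = 0 := by
    have hcompl : Aᶜ = ⋃ i ∈ Finset.range k, (X i ⁻¹' {1} ∪ X i ⁻¹' {(-1 : ℤ)})ᶜ := by
      rw [hA]
      ext ω
      simp [Set.mem_iInter]
    rw [hcompl]
    refine le_antisymm (le_trans (measure_biUnion_finset_le _ _)
      (le_of_eq (Finset.sum_eq_zero fun i _ => ?_))) (zero_le)
    rw [prob_compl_eq_zero_iff
      (((hmeas i) (measurableSet_singleton _)).union ((hmeas i) (measurableSet_singleton _)))]
    exact hXiprob i
  -- decomposition of the event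
  have hEA : E ∩ A = ⋃ g ∈ Gs, Cyl g := by
    ext ω
    constructor
    · rintro ⟨hωE, hωA⟩
      set g : Fin k → Bool := fun i => decide (X i ω = 1) with hg
      have hXg : ∀ i < k, X i ω = RWAux.lstep (RWAux.ext g i) := by
        intro i hi
        have hmem : ω ∈ X i ⁻¹' {1} ∪ X i ⁻¹' {(-1 : ℤ)} := by
          have := Set.mem_iInter₂.mp hωA i (Finset.mem_range.mpr hi)
          exact this
        have hext : RWAux.ext g i = g ⟨i, hi⟩ := by unfold RWAux.ext; rw [dif_pos hi]
        rcases hmem with h1 | h1 <;>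
          simp only [Set.mem_preimage, Set.mem_singleton_iff] at h1
        · have hgv : g ⟨i, hi⟩ = true := by simp [hg, h1]
          rw [hext, hgv, h1]; rfl
        · have hgv : g ⟨i, hi⟩ = false := by simp [hg, h1]
          rw [hext, hgv, h1]; rfl
      have hfp : RWAux.FPf a k (RWAux.ext g) := by
        obtain ⟨hsum, hmid⟩ := hωE
        constructor
        · rw [← hXS g ω hXg k le_rfl]; exact hsum
        · intro m hm hm1
          rw [← hXS g ω hXg m (le_of_lt hm)]
          exact hmid m hm1 hm
      exact Set.mem_biUnion (Finset.mem_filter.mpr ⟨Finset.mem_univ g, hfp⟩)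
        ((hmemCyl g ω).mpr hXg)
    · intro hω
      obtain ⟨g, hgGs, hωC⟩ := Set.mem_iUnion₂.mp hω
      have hXg := (hmemCyl g ω).mp hωC
      have hfp : RWAux.FPf a k (RWAux.ext g) := (Finset.mem_filter.mp hgGs).2
      constructor
      · rw [hE]
        refine ⟨?_, ?_⟩
        · rw [hXS g ω hXg k le_rfl]; exact hfp.1
        · intro m hm hm1
          rw [hXS g ω hXg m (le_of_lt hm1)]
          exact hfp.2 m hm1 hm
      · rw [hA]
        refine Set.mem_iInter₂.mpr fun i hi => ?_
        rw [Set.mem_union, Set.mem_preimage, Set.mem_preimage,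
          Set.mem_singleton_iff, Set.mem_singleton_iff,
          hXg i (Finset.mem_range.mp hi)]
        exact RWAux.lstep_mem _
  -- disjointness and measurability of cylinders
  have hCylmeas : ∀ g : Fin k → Bool, MeasurableSet (Cyl g) :=
    fun g => MeasurableSet.biInter (Finset.range k).countable_toSet fun i _ =>
      (hmeas i) (measurableSet_singleton _)
  have hdisj : (↑Gs : Set (Fin k → Bool)).PairwiseDisjoint Cyl := by
    intro g1 _ g2 _ hne
    refine Set.disjoint_left.mpr fun ω hω1 hω2 => ?_
    obtain ⟨i, hi⟩ := Function.ne_iff.mp hne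
    have e1 := (hmemCyl g1 ω).mp hω1 i.val i.isLt
    have e2 := (hmemCyl g2 ω).mp hω2 i.val i.isLt
    rw [RWAux.ext_val] at e1 e2
    exact hi (RWAux.lstep_inj (e1 ▸ e2))
  -- measure of a cylinder
  have hCylMeasure : ∀ g ∈ Gs,
      μ (Cyl g) = ENNReal.ofReal (p ^ jn * (1 - p) ^ (k - jn)) := by
    intro g hg
    have hprod := hindep.measure_inter_preimage_eq_mul (Finset.range k)
      (sets := fun i => {RWAux.lstep (RWAux.ext g i)})
      (fun i _ => measurableSet_singleton _)
    rw [hCyl]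
    rw [hprod]
    have hfac : ∀ i, μ (X i ⁻¹' {RWAux.lstep (RWAux.ext g i)})
        = if RWAux.ext g i = true then ENNReal.ofReal p else ENNReal.ofReal (1 - p) := by
      intro i
      cases hcase : RWAux.ext g i
      · rw [if_neg (by simp)]
        rw [show RWAux.lstep false = (-1 : ℤ) from rfl, hPre]
        exact hX2 i
      · rw [if_pos rfl]
        rw [show RWAux.lstep true = (1 : ℤ) from rfl, hPre]
        exact hX1 i
    rw [Finset.prod_congr rfl (fun i _ => hfac i)]
    rw [← Finset.prod_filter_mul_prod_filter_not (Finset.range k)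
      (fun i => RWAux.ext g i = true)]
    have hcard : (((Finset.range k).filter fun i => RWAux.ext g i = true).card) = jn := by
      have hfp : RWAux.FPf a k (RWAux.ext g) := (Finset.mem_filter.mp hg).2
      have hps := RWAux.psum_eq (RWAux.ext g) k
      have hsum := hfp.1
      omega
    have hcard2 : (((Finset.range k).filter fun i => ¬ (RWAux.ext g i = true)).card) = k - jn := by
      have := Finset.card_filter_add_card_filter_not
        (s := Finset.range k) (p := fun i => RWAux.ext g i = true)
      rw [Finset.card_range] at this
      omega
    have h1 : (∏ i ∈ (Finset.range k).filter (fun i => RWAux.ext g i = true),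
        (if RWAux.ext g i = true then ENNReal.ofReal p else ENNReal.ofReal (1 - p)))
        = ENNReal.ofReal p ^ jn := by
      rw [Finset.prod_congr rfl (fun i hi => if_pos (Finset.mem_filter.mp hi).2),
        Finset.prod_const, hcard]
    have h2 : (∏ i ∈ (Finset.range k).filter (fun i => ¬ (RWAux.ext g i = true)),
        (if RWAux.ext g i = true then ENNReal.ofReal p else ENNReal.ofReal (1 - p)))
        = ENNReal.ofReal (1 - p) ^ (k - jn) := by
      rw [Finset.prod_congr rfl (fun i hi => if_neg (Finset.mem_filter.mp hi).2),
        Finset.prod_const, hcard2]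
    rw [h1, h2, ← ENNReal.ofReal_pow hp0.le, ← ENNReal.ofReal_pow hq0.le,
      ← ENNReal.ofReal_mul (pow_nonneg hp0.le _)]
  -- putting everything together
  have hμE : μ E = Gs.card * ENNReal.ofReal (p ^ jn * (1 - p) ^ (k - jn)) := by
    have hsplit := measure_inter_add_diff (μ := μ) E hAmeas
    have hdiff : μ (E \ A) = 0 := measure_mono_null (fun ω hω => hω.2) hAc
    have h1 : μ E = μ (E ∩ A) := by rw [← hsplit, hdiff, add_zero]
    rw [h1, hEA, measure_biUnion_finset hdisj (fun g _ => hCylmeas g),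
      Finset.sum_congr rfl hCylMeasure, Finset.sum_const, nsmul_eq_mul]
  rw [hμE, ENNReal.toReal_mul, ENNReal.toReal_natCast,
    ENNReal.toReal_ofReal (mul_nonneg (pow_nonneg hp0.le _) (pow_nonneg hq0.le _))]
  have hGsCount : Gs.card = RWAux.fpCount k a := rfl
  rw [hj2, hGsCount, RWAux.main_count k a ha hk jn hj]
  ring
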